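/- There is a universal constant A > 0 with the following property. Let p and q be probability mass functions on {1,…,k}×{1,…,ℓ} with k, ℓ ≥ 2, and suppose D_TV(p,q) ≤ δ for some δ with 0 < δ ≤ 1/4. Then |I(p) − I(q)| ≤ A·δ·log₂(min(k,ℓ)/δ). -/

import Mathlib

open MeasureTheory Finset

noncomputable section

/-- A grid with `r` rows and `c` columns on ℝ², given by `r - 1` strictly increasing
row cut points and `c - 1` strictly increasing column cut points. -/
structure Grid (r c : ℕ) where
  rowCuts : Fin (r - 1) → ℝ
  colCuts : Fin (c - 1) → ℝ
  rowCuts_mono : StrictMono rowCuts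
  colCuts_mono : StrictMono colCuts

/-- Interval number `i` of the partition of ℝ induced by the cut points `cuts`:
`[cuts (i-1), cuts i)`, with the first interval unbounded below and the last
unbounded above. -/
def cutInterval {m : ℕ} (cuts : Fin (m - 1) → ℝ) (i : Fin m) : Set ℝ :=
  {t | (∀ j : Fin (m - 1), (j : ℕ) < (i : ℕ) → cuts j ≤ t) ∧
       (∀ j : Fin (m - 1), (i : ℕ) ≤ (j : ℕ) → t < cuts j)}

/-- Cell `(i, j)` (row `i`, column `j`) of a grid, as a subset of ℝ². -/
def Grid.cell {r c : ℕ} (G : Grid r c) (i : Fin r) (j : Fin c) : Set (ℝ × ℝ) :=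
  {p | p.1 ∈ cutInterval G.colCuts j ∧ p.2 ∈ cutInterval G.rowCuts i}

/-- The probability mass function on `{1,…,r} × {1,…,c}` induced by a measure `ν`
on a grid `G`: it assigns to `(i, j)` the `ν`-measure of cell `(i, j)`. -/
def gridPMF {r c : ℕ} (ν : Measure (ℝ × ℝ)) (G : Grid r c) (i : Fin r) (j : Fin c) : ℝ :=
  (ν (G.cell i j)).toReal

open Classical in
/-- The empirical measure of the sample `ω`, as a real-valued set function. -/
def empMeas {n : ℕ} (ω : Fin n → ℝ × ℝ) (S : Set (ℝ × ℝ)) : ℝ :=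
  ((Finset.univ.filter (fun i => ω i ∈ S)).card : ℝ) / n

/-- The pmf on cells induced by the empirical measure of the sample `ω`. -/
def empGridPMF {n r c : ℕ} (ω : Fin n → ℝ × ℝ) (G : Grid r c) (i : Fin r) (j : Fin c) : ℝ :=
  empMeas ω (G.cell i j)

/-- Mutual information (base 2) of a pmf `p` on `Fin r × Fin c`, with the convention
that terms with `p i j = 0` vanish. -/
def MI {r c : ℕ} (p : Fin r → Fin c → ℝ) : ℝ :=
  ∑ i, ∑ j, if p i j = 0 then 0
    else p i j * Real.logb 2 (p i j / ((∑ j', p i j') * (∑ i', p i' j)))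


/-- Total variation distance between two pmfs on `Fin r × Fin c`. -/
def tvDist {r c : ℕ} (p q : Fin r → Fin c → ℝ) : ℝ :=
  (∑ i, ∑ j, |p i j - q i j|) / 2

namespace MIAux


/-- φ t = t·log(1/t), the entropy summand; equals −t·log t everywhere. -/
def phi (t : ℝ) : ℝ := t * Real.log (1 / t)

lemma phi_eq (t : ℝ) : phi t = -(t * Real.log t) := by
  rw [phi, one_div, Real.log_inv]; ring

lemma phi_zero : phi 0 = 0 := by simp [phi]

lemma phi_nonneg {t : ℝ} (h0 : 0 ≤ t) (h1 : t ≤ 1) : 0 ≤ phi t := by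
  rcases eq_or_lt_of_le h0 with h | h
  · simp [phi, ← h]
  · have : (0:ℝ) ≤ Real.log (1/t) := by
      apply Real.log_nonneg
      rw [le_div_iff₀ h]; linarith
    exact mul_nonneg h0 this

/-- Modulus of continuity of t log t on [0,1]. -/
lemma abs_phi_sub {x y : ℝ} (hy0 : 0 ≤ y) (hyx : y ≤ x) (hx1 : x ≤ 1) :
    |phi x - phi y| ≤ phi (x - y) + (x - y) := by
  rcases eq_or_lt_of_le hyx with h | h
  · simp [h, phi_zero]
  set e := x - y with he
  have he0 : 0 < e := sub_pos.mpr h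
  have hx0 : 0 < x := lt_of_lt_of_le he0 (by linarith)
  have key : phi y - phi x = e * Real.log x + y * (Real.log x - Real.log y) := by
    rcases eq_or_lt_of_le hy0 with h0 | h0
    · simp [← h0, phi_eq, he]
    · simp [phi_eq, he]; ring
  have b1 : |e * Real.log x| ≤ phi e := by
    have hlx : Real.log x ≤ 0 := Real.log_nonpos hx0.le hx1
    have hex : Real.log e ≤ Real.log x := Real.log_le_log he0 (by linarith)
    rw [abs_mul, abs_of_pos he0, abs_of_nonpos hlx, phi_eq]
    nlinarith
  have b2 : |y * (Real.log x - Real.log y)| ≤ e := by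
    rcases eq_or_lt_of_le hy0 with h0 | h0
    · rw [← h0]; simpa using he0.le
    · have hpos : 0 ≤ Real.log x - Real.log y := by
        have := Real.log_le_log h0 hyx; linarith
      rw [abs_mul, abs_of_pos h0, abs_of_nonneg hpos]
      have : Real.log x - Real.log y = Real.log (x / y) := (Real.log_div hx0.ne' h0.ne').symm
      rw [this]
      have h2 : Real.log (x / y) ≤ x / y - 1 := Real.log_le_sub_one_of_pos (by positivity)
      have : y * Real.log (x/y) ≤ y * (x/y - 1) := by nlinarith
      calc y * Real.log (x/y) ≤ y * (x/y - 1) := this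
        _ = x - y := by field_simp
  calc |phi x - phi y| = |(phi y - phi x)| := by rw [abs_sub_comm]
    _ = |e * Real.log x + y * (Real.log x - Real.log y)| := by rw [key]
    _ ≤ |e * Real.log x| + |y * (Real.log x - Real.log y)| := abs_add_le _ _
    _ ≤ phi e + e := add_le_add b1 b2

lemma abs_phi_sub' {x y : ℝ} (hx0 : 0 ≤ x) (hx1 : x ≤ 1) (hy0 : 0 ≤ y) (hy1 : y ≤ 1) :
    |phi x - phi y| ≤ phi |x - y| + |x - y| := by
  rcases le_total y x with h | h
  · have e1 : |x - y| = x - y := abs_of_nonneg (by linarith)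
    rw [e1]; exact abs_phi_sub hy0 h hx1
  · have e1 : |x - y| = y - x := by rw [abs_sub_comm]; exact abs_of_nonneg (by linarith)
    rw [e1, abs_sub_comm]; exact abs_phi_sub hx0 h hy1


variable {ι : Type*} [Fintype ι]

/-- Log-sum inequality, upper-bound form. -/
lemma sum_mul_log_div_le (a b : ι → ℝ) (ha : ∀ i, 0 ≤ a i) (hb : ∀ i, 0 ≤ b i)
    (hz : ∀ i, a i ≠ 0 → b i ≠ 0) {B : ℝ} (hB : ∑ i, b i ≤ B)
    (hA : 0 < ∑ i, a i) :
    ∑ i, a i * Real.log (b i / a i) ≤ (∑ i, a i) * Real.log (B / ∑ i, a i) := by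
  set A := ∑ i, a i with hAdef
  have hB0 : 0 < B := by
    obtain ⟨i, -, hi⟩ := Finset.exists_lt_of_sum_lt
      (show ∑ _i : ι, (0:ℝ) < ∑ i, a i by simpa using hA)
    have hbi : 0 < b i := (hb i).lt_of_ne' (hz i hi.ne')
    calc (0:ℝ) < b i := hbi
      _ ≤ ∑ i, b i := Finset.single_le_sum (fun i _ => hb i) (mem_univ i)
      _ ≤ B := hB
  have key : ∀ i, a i * Real.log (b i / a i) ≤ a i * Real.log (B / A) + b i * A / B - a i := by
    intro i
    rcases eq_or_lt_of_le (ha i) with h0 | h0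
    · rw [← h0]; simp
      exact div_nonneg (mul_nonneg (hb i) hA.le) hB0.le
    · have hbi : 0 < b i := (hb i).lt_of_ne' (hz i h0.ne')
      have h1 : Real.log ((b i / a i) / (B / A)) = Real.log (b i / a i) - Real.log (B / A) :=
        Real.log_div (by positivity) (by positivity)
      have h2 : Real.log ((b i / a i) / (B / A)) ≤ (b i / a i) / (B / A) - 1 :=
        Real.log_le_sub_one_of_pos (by positivity)
      have h3 : (b i / a i) / (B / A) = b i * A / (a i * B) := by
        field_simp
      have h4 : Real.log (b i / a i) ≤ Real.log (B / A) + b i * A / (a i * B) - 1 := by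
        rw [h1] at h2; rw [h3] at h2; linarith
      have h5 := mul_le_mul_of_nonneg_left h4 h0.le
      have h6 : a i * (Real.log (B / A) + b i * A / (a i * B) - 1)
          = a i * Real.log (B / A) + b i * A / B - a i := by
        field_simp
      linarith [h6 ▸ h5]
  calc ∑ i, a i * Real.log (b i / a i)
      ≤ ∑ i, (a i * Real.log (B / A) + b i * A / B - a i) := Finset.sum_le_sum fun i _ => key i
    _ = A * Real.log (B / A) + (∑ i, b i) * A / B - A := by
        rw [Finset.sum_sub_distrib, Finset.sum_add_distrib, ← Finset.sum_mul, ← Finset.sum_div,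
          ← Finset.sum_mul]
    _ ≤ A * Real.log (B / A) := by
        have : (∑ i, b i) * A / B ≤ A := by
          rw [div_le_iff₀ hB0]
          nlinarith
        linarith

/-- Entropy-type sum bounded by (total mass) · log(card). -/
lemma sum_mul_log_sumdiv_le (a : ι → ℝ) (ha : ∀ i, 0 ≤ a i) :
    ∑ i, a i * Real.log ((∑ i', a i') / a i)
      ≤ (∑ i, a i) * Real.log (Fintype.card ι) := by
  set A := ∑ i, a i with hAdef
  have hA0 : 0 ≤ A := Finset.sum_nonneg fun i _ => ha i
  rcases eq_or_lt_of_le hA0 with h0 | h0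
  · have hall : ∀ i ∈ Finset.univ, a i = 0 :=
      (Finset.sum_eq_zero_iff_of_nonneg (fun i _ => ha i)).mp h0.symm
    have hz2 : ∑ i, a i * Real.log ((∑ i', a i') / a i) = 0 :=
      Finset.sum_eq_zero fun i hi => by rw [hall i hi]; ring
    rw [hz2, ← h0]
    simp
  · have key := sum_mul_log_div_le a (fun _ => A) ha (fun _ => hA0)
      (fun i hi => h0.ne') (B := (Fintype.card ι) * A) (by simp [Finset.sum_const, mul_comm]) h0
    have : (Fintype.card ι : ℝ) * A / A = (Fintype.card ι : ℝ) := by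
      field_simp
    rwa [this] at key

lemma sum_mul_log_sumdiv_nonneg (a : ι → ℝ) (ha : ∀ i, 0 ≤ a i) :
    0 ≤ ∑ i, a i * Real.log ((∑ i', a i') / a i) := by
  apply Finset.sum_nonneg
  intro i _
  rcases eq_or_lt_of_le (ha i) with h0 | h0
  · rw [← h0]; simp
  · refine mul_nonneg (ha i) ?_
    apply Real.log_nonneg
    rw [le_div_iff₀ h0]
    simpa using Finset.single_le_sum (fun i _ => ha i) (mem_univ i)

/-- Massaging: t·log(B/t) ≤ m·log(B/δ) + δ for 0 ≤ t ≤ m, 0 < δ ≤ B. -/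
lemma massage {t m δ B : ℝ} (h0 : 0 ≤ t) (htm : t ≤ m) (hδ : 0 < δ) (hδB : δ ≤ B) :
    t * Real.log (B / t) ≤ m * Real.log (B / δ) + δ := by
  have hB0 : 0 < B := lt_of_lt_of_le hδ hδB
  have hlogBδ : 0 ≤ Real.log (B / δ) := Real.log_nonneg (by rw [le_div_iff₀ hδ]; linarith)
  rcases eq_or_lt_of_le h0 with h | h
  · have hm0 : 0 ≤ m := le_trans h0 htm
    rw [← h]
    simpa using add_nonneg (mul_nonneg hm0 hlogBδ) hδ.le
  · have e1 : Real.log (B / t) = Real.log (B / δ) + Real.log (δ / t) := by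
      rw [← Real.log_mul (by positivity) (by positivity)]
      congr 1
      field_simp
    have e2 : t * Real.log (δ / t) ≤ δ - t := by
      have := Real.log_le_sub_one_of_pos (show 0 < δ / t by positivity)
      calc t * Real.log (δ / t) ≤ t * (δ / t - 1) := by nlinarith
        _ = δ - t := by field_simp
    have e3 : t * Real.log (B / δ) ≤ m * Real.log (B / δ) :=
      mul_le_mul_of_nonneg_right htm hlogBδ
    calc t * Real.log (B / t) = t * Real.log (B / δ) + t * Real.log (δ / t) := by rw [e1]; ring
      _ ≤ m * Real.log (B / δ) + (δ - t) := add_le_add e3 e2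
      _ ≤ m * Real.log (B / δ) + δ := by linarith

/-- Master bound combining log-sum and massaging. -/
lemma masterBound (a b : ι → ℝ) (ha : ∀ i, 0 ≤ a i) (hb : ∀ i, 0 ≤ b i)
    (hz : ∀ i, a i ≠ 0 → b i ≠ 0) {B m δ : ℝ} (hB : ∑ i, b i ≤ B)
    (hm : ∑ i, a i ≤ m) (hδ : 0 < δ) (hδB : δ ≤ B) :
    ∑ i, a i * Real.log (b i / a i) ≤ m * Real.log (B / δ) + δ := by
  have hA0 : 0 ≤ ∑ i, a i := Finset.sum_nonneg fun i _ => ha i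
  rcases eq_or_lt_of_le hA0 with h0 | h0
  · have hall : ∀ i ∈ Finset.univ, a i = 0 :=
      (Finset.sum_eq_zero_iff_of_nonneg (fun i _ => ha i)).mp h0.symm
    have hz2 : ∑ i, a i * Real.log (b i / a i) = 0 :=
      Finset.sum_eq_zero fun i hi => by rw [hall i hi]; ring
    have hm0 : 0 ≤ m := le_trans (le_of_eq h0) hm
    have hlg : 0 ≤ Real.log (B / δ) := Real.log_nonneg (by rw [le_div_iff₀ hδ]; linarith)
    rw [hz2]
    exact add_nonneg (mul_nonneg hm0 hlg) hδ.le
  · calc ∑ i, a i * Real.log (b i / a i)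
        ≤ (∑ i, a i) * Real.log (B / ∑ i, a i) :=
          sum_mul_log_div_le a b ha hb hz hB h0
      _ ≤ m * Real.log (B / δ) + δ := massage hA0 hm hδ (le_trans hδB (le_refl B))

lemma two_le_log {k : ℕ} {δ : ℝ} (hk : 2 ≤ k) (hδ0 : 0 < δ) (hδ4 : δ ≤ 1/4) :
    2 ≤ Real.log ((k : ℝ) / δ) := by
  have h8 : (8 : ℝ) ≤ (k : ℝ) / δ := by
    rw [le_div_iff₀ hδ0]
    have : (2:ℝ) ≤ (k:ℝ) := by exact_mod_cast hk
    nlinarith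
  have hexp : Real.exp 2 ≤ 8 := by
    have h1 := Real.exp_one_lt_d9
    have : Real.exp 2 = Real.exp 1 * Real.exp 1 := by
      rw [← Real.exp_add]; norm_num
    nlinarith [Real.exp_pos 1]
  calc (2:ℝ) = Real.log (Real.exp 2) := (Real.log_exp 2).symm
    _ ≤ Real.log ((k:ℝ)/δ) := Real.log_le_log (Real.exp_pos 2) (le_trans hexp h8)


variable {k l : ℕ}

def rM (p : Fin k → Fin l → ℝ) (i : Fin k) : ℝ := ∑ j, p i j
def cM (p : Fin k → Fin l → ℝ) (j : Fin l) : ℝ := ∑ i, p i j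

def entR (p : Fin k → Fin l → ℝ) : ℝ := ∑ i, phi (rM p i)

def condEnt (p : Fin k → Fin l → ℝ) : ℝ :=
  ∑ j, ∑ i, p i j * Real.log (cM p j / p i j)

lemma MI_eq (p : Fin k → Fin l → ℝ) (hp : ∀ i j, 0 ≤ p i j) :
    MI p * Real.log 2 = entR p - condEnt p := by
  have hlog2 : Real.log 2 ≠ 0 := by
    have := Real.log_pos (by norm_num : (1:ℝ) < 2); linarith
  have step1 : MI p * Real.log 2
      = ∑ i, ∑ j, (if p i j = 0 then 0
          else p i j * Real.log (p i j / (rM p i * cM p j))) := by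
    rw [MI, Finset.sum_mul]
    refine Finset.sum_congr rfl fun i _ => ?_
    rw [Finset.sum_mul]
    refine Finset.sum_congr rfl fun j _ => ?_
    by_cases h : p i j = 0
    · simp [h]
    · simp only [h, if_false]
      rw [Real.logb, rM, cM]
      field_simp
  rw [step1]
  have step2 : entR p - condEnt p
      = ∑ i, ∑ j, (p i j * Real.log (1 / rM p i) - p i j * Real.log (cM p j / p i j)) := by
    rw [entR, condEnt, Finset.sum_comm (γ := Fin l)]
    rw [← Finset.sum_sub_distrib]
    refine Finset.sum_congr rfl fun i _ => ?_
    have hphi : phi (rM p i) = ∑ j, p i j * Real.log (1 / rM p i) := by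
      rw [phi]
      nth_rewrite 1 [rM]
      rw [Finset.sum_mul]
    rw [hphi, ← Finset.sum_sub_distrib]
  rw [step2]
  refine Finset.sum_congr rfl fun i _ => Finset.sum_congr rfl fun j _ => ?_
  by_cases h : p i j = 0
  · simp [h]
  · have hpij : 0 < p i j := (hp i j).lt_of_ne' h
    have hr : 0 < rM p i := lt_of_lt_of_le hpij
      (Finset.single_le_sum (fun j' _ => hp i j') (mem_univ j))
    have hc : 0 < cM p j := lt_of_lt_of_le hpij
      (Finset.single_le_sum (fun i' _ => hp i' j) (mem_univ i))
    simp only [h, if_false]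
    rw [Real.log_div hpij.ne' (by positivity), Real.log_mul hr.ne' hc.ne',
      Real.log_div hc.ne' hpij.ne', one_div, Real.log_inv]
    ring


lemma frac_nonneg (a : Fin k → ℝ) (ha : ∀ i, 0 ≤ a i) (i : Fin k) :
    0 ≤ a i / (∑ i', a i') :=
  div_nonneg (ha i) (Finset.sum_nonneg fun i _ => ha i)

lemma frac_le_one (a : Fin k → ℝ) (ha : ∀ i, 0 ≤ a i) (i : Fin k) :
    a i / (∑ i', a i') ≤ 1 := by
  set A := ∑ i', a i' with hA
  have hA0 : 0 ≤ A := Finset.sum_nonneg fun i _ => ha i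
  rcases eq_or_lt_of_le hA0 with h | h
  · have : a i = 0 := by
      have hall := (Finset.sum_eq_zero_iff_of_nonneg (fun i _ => ha i)).mp h.symm
      exact hall i (mem_univ i)
    simp [this]
  · rw [div_le_one h]
    exact Finset.single_le_sum (fun i _ => ha i) (mem_univ i)

lemma sum_frac (a : Fin k → ℝ) (hA : (∑ i', a i') ≠ 0) :
    ∑ i, a i / (∑ i', a i') = 1 := by
  rw [← Finset.sum_div, div_self hA]

/-- Normalized entropy is at most log k. -/
lemma Hnorm_le (u : Fin k → ℝ) (hu : ∀ i, 0 ≤ u i) (hS : ∑ i, u i = 1) :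
    ∑ i, phi (u i) ≤ Real.log k := by
  have h := sum_mul_log_sumdiv_le u hu
  rw [hS] at h
  simpa [phi, Fintype.card_fin] using h

lemma Hnorm_nonneg (u : Fin k → ℝ) (hu : ∀ i, 0 ≤ u i) (hS : ∑ i, u i = 1) :
    0 ≤ ∑ i, phi (u i) := by
  have h := sum_mul_log_sumdiv_nonneg u hu
  rw [hS] at h
  simpa [phi] using h

/-- Column sum rewritten in terms of normalized entropy. -/
lemma col_factor (p : Fin k → Fin l → ℝ) (hp : ∀ i j, 0 ≤ p i j) (j : Fin l) :
    ∑ i, p i j * Real.log (cM p j / p i j) = cM p j * ∑ i, phi (p i j / cM p j) := by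
  rw [Finset.mul_sum]
  refine Finset.sum_congr rfl fun i _ => ?_
  by_cases h : p i j = 0
  · simp [h, phi]
  · have hpij : 0 < p i j := (hp i j).lt_of_ne' h
    have hc : 0 < cM p j := lt_of_lt_of_le hpij
      (Finset.single_le_sum (fun i' _ => hp i' j) (mem_univ i))
    rw [phi, one_div_div]
    field_simp

lemma colSum_nonneg (p : Fin k → Fin l → ℝ) (hp : ∀ i j, 0 ≤ p i j) (j : Fin l) :
    0 ≤ ∑ i, p i j * Real.log (cM p j / p i j) :=
  sum_mul_log_sumdiv_nonneg (fun i => p i j) (fun i => hp i j)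

lemma colSum_le (p : Fin k → Fin l → ℝ) (hp : ∀ i j, 0 ≤ p i j) (j : Fin l) :
    ∑ i, p i j * Real.log (cM p j / p i j) ≤ cM p j * Real.log k := by
  have h := sum_mul_log_sumdiv_le (fun i => p i j) (fun i => hp i j)
  simpa [Fintype.card_fin, cM] using h

lemma col_bound (hk : 1 ≤ k) (p q : Fin k → Fin l → ℝ)
    (hp : ∀ i j, 0 ≤ p i j) (hq : ∀ i j, 0 ≤ q i j) (j : Fin l) :
    |(∑ i, p i j * Real.log (cM p j / p i j)) - ∑ i, q i j * Real.log (cM q j / q i j)|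
      ≤ |cM p j - cM q j| * Real.log k
        + ∑ i, (cM q j * phi |p i j / cM p j - q i j / cM q j|
            + cM q j * |p i j / cM p j - q i j / cM q j|) := by
  have hcp0 : 0 ≤ cM p j := Finset.sum_nonneg fun i _ => hp i j
  have hcq0 : 0 ≤ cM q j := Finset.sum_nonneg fun i _ => hq i j
  have hu0 : ∀ i, 0 ≤ p i j / cM p j := fun i => frac_nonneg (fun i => p i j) (fun i => hp i j) i
  have hu1 : ∀ i, p i j / cM p j ≤ 1 := fun i => frac_le_one (fun i => p i j) (fun i => hp i j) i
  have hv0 : ∀ i, 0 ≤ q i j / cM q j := fun i => frac_nonneg (fun i => q i j) (fun i => hq i j) i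
  have hv1 : ∀ i, q i j / cM q j ≤ 1 := fun i => frac_le_one (fun i => q i j) (fun i => hq i j) i
  have hE1 : ∀ i, |p i j / cM p j - q i j / cM q j| ≤ 1 := by
    intro i
    rw [abs_sub_le_iff]
    constructor <;> [linarith [hu1 i, hv0 i]; linarith [hu0 i, hv1 i]]
  have hExtra0 : 0 ≤ ∑ i, (cM q j * phi |p i j / cM p j - q i j / cM q j|
      + cM q j * |p i j / cM p j - q i j / cM q j|) :=
    Finset.sum_nonneg fun i _ => add_nonneg
      (mul_nonneg hcq0 (phi_nonneg (abs_nonneg _) (hE1 i)))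
      (mul_nonneg hcq0 (abs_nonneg _))
  have hlogk : 0 ≤ Real.log k :=
    Real.log_nonneg (by exact_mod_cast hk)
  by_cases hcp : cM p j = 0
  · have hallp : ∀ i, p i j = 0 := by
      intro i
      exact (Finset.sum_eq_zero_iff_of_nonneg (fun i _ => hp i j)).mp hcp i (mem_univ i)
    have hSp : ∑ i, p i j * Real.log (cM p j / p i j) = 0 :=
      Finset.sum_eq_zero fun i _ => by rw [hallp i]; ring
    have hSq0 : 0 ≤ ∑ i, q i j * Real.log (cM q j / q i j) := colSum_nonneg q hq j
    have hSqk := colSum_le q hq j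
    rw [hcp] at hExtra0
    rw [hSp, hcp]
    rw [zero_sub, abs_neg, abs_of_nonneg hSq0, zero_sub, abs_neg, abs_of_nonneg hcq0]
    linarith
  · by_cases hcq : cM q j = 0
    · have hallq : ∀ i, q i j = 0 := by
        intro i
        exact (Finset.sum_eq_zero_iff_of_nonneg (fun i _ => hq i j)).mp hcq i (mem_univ i)
      have hSq : ∑ i, q i j * Real.log (cM q j / q i j) = 0 :=
        Finset.sum_eq_zero fun i _ => by rw [hallq i]; ring
      have hSp0 : 0 ≤ ∑ i, p i j * Real.log (cM p j / p i j) := colSum_nonneg p hp j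
      have hSpk := colSum_le p hp j
      rw [hSq, hcq]
      rw [sub_zero, abs_of_nonneg hSp0, sub_zero, abs_of_nonneg hcp0]
      have hz : ∑ i, ((0:ℝ) * phi |p i j / cM p j - q i j / 0| + 0 * |p i j / cM p j - q i j / 0|)
          = 0 := Finset.sum_eq_zero fun i _ => by ring
      rw [hz]
      linarith
    · have hcp' : 0 < cM p j := hcp0.lt_of_ne' hcp
      have hcq' : 0 < cM q j := hcq0.lt_of_ne' hcq
      have hSu : ∑ i, p i j / cM p j = 1 := sum_frac (fun i => p i j) hcp
      have hSv : ∑ i, q i j / cM q j = 1 := sum_frac (fun i => q i j) hcq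
      have hHu_le : ∑ i, phi (p i j / cM p j) ≤ Real.log k := Hnorm_le _ hu0 hSu
      have hHu0 : 0 ≤ ∑ i, phi (p i j / cM p j) := Hnorm_nonneg _ hu0 hSu
      have hdiff : |(∑ i, phi (p i j / cM p j)) - ∑ i, phi (q i j / cM q j)|
          ≤ ∑ i, (phi |p i j / cM p j - q i j / cM q j| + |p i j / cM p j - q i j / cM q j|) := by
        rw [← Finset.sum_sub_distrib]
        refine (Finset.abs_sum_le_sum_abs _ _).trans ?_
        exact Finset.sum_le_sum fun i _ => abs_phi_sub' (hu0 i) (hu1 i) (hv0 i) (hv1 i)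
      rw [col_factor p hp j, col_factor q hq j]
      have key : cM p j * (∑ i, phi (p i j / cM p j)) - cM q j * (∑ i, phi (q i j / cM q j))
          = (cM p j - cM q j) * (∑ i, phi (p i j / cM p j))
            + cM q j * ((∑ i, phi (p i j / cM p j)) - ∑ i, phi (q i j / cM q j)) := by ring
      rw [key]
      refine (abs_add_le _ _).trans ?_
      rw [abs_mul, abs_mul]
      have b1 : |cM p j - cM q j| * |∑ i, phi (p i j / cM p j)|
          ≤ |cM p j - cM q j| * Real.log k := by
        apply mul_le_mul_of_nonneg_left _ (abs_nonneg _)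
        rw [abs_of_nonneg hHu0]; exact hHu_le
      have b2 : |cM q j| * |(∑ i, phi (p i j / cM p j)) - ∑ i, phi (q i j / cM q j)|
          ≤ ∑ i, (cM q j * phi |p i j / cM p j - q i j / cM q j|
              + cM q j * |p i j / cM p j - q i j / cM q j|) := by
        rw [abs_of_nonneg hcq0]
        calc cM q j * |(∑ i, phi (p i j / cM p j)) - ∑ i, phi (q i j / cM q j)|
            ≤ cM q j * ∑ i, (phi |p i j / cM p j - q i j / cM q j|
                + |p i j / cM p j - q i j / cM q j|) := mul_le_mul_of_nonneg_left hdiff hcq0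
          _ = ∑ i, (cM q j * phi |p i j / cM p j - q i j / cM q j|
                + cM q j * |p i j / cM p j - q i j / cM q j|) := by
              rw [Finset.mul_sum]
              exact Finset.sum_congr rfl fun i _ => by ring
      exact add_le_add b1 b2

lemma colT (p q : Fin k → Fin l → ℝ)
    (hp : ∀ i j, 0 ≤ p i j) (hq : ∀ i j, 0 ≤ q i j) (j : Fin l) :
    ∑ i, cM q j * |p i j / cM p j - q i j / cM q j|
      ≤ (∑ i, |p i j - q i j|) + |cM p j - cM q j| := by
  have hcp0 : 0 ≤ cM p j := Finset.sum_nonneg fun i _ => hp i j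
  have hcq0 : 0 ≤ cM q j := Finset.sum_nonneg fun i _ => hq i j
  have habs0 : 0 ≤ ∑ i, |p i j - q i j| := Finset.sum_nonneg fun i _ => abs_nonneg _
  by_cases hcq : cM q j = 0
  · have hz : ∑ i, cM q j * |p i j / cM p j - q i j / cM q j| = 0 :=
      Finset.sum_eq_zero fun i _ => by rw [hcq]; ring
    rw [hz]
    positivity
  · have hcq' : 0 < cM q j := hcq0.lt_of_ne' hcq
    by_cases hcp : cM p j = 0
    · have hallp : ∀ i, p i j = 0 := by
        intro i
        exact (Finset.sum_eq_zero_iff_of_nonneg (fun i _ => hp i j)).mp hcp i (mem_univ i)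
      have hterm : ∀ i, cM q j * |p i j / cM p j - q i j / cM q j| = q i j := by
        intro i
        rw [hallp i, zero_div, zero_sub, abs_neg,
          abs_of_nonneg (div_nonneg (hq i j) hcq0)]
        field_simp
      rw [Finset.sum_congr rfl fun i _ => hterm i]
      have h1 : ∑ i, q i j = cM q j := rfl
      have h2 : |cM p j - cM q j| = cM q j := by rw [hcp, zero_sub, abs_neg, abs_of_nonneg hcq0]
      rw [h1, h2]
      linarith
    · have hcp' : 0 < cM p j := hcp0.lt_of_ne' hcp
      have key : ∀ i, cM q j * |p i j / cM p j - q i j / cM q j|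
          ≤ |p i j - q i j| + (p i j / cM p j) * |cM p j - cM q j| := by
        intro i
        have e2 : cM q j * (q i j / cM q j) = q i j := by field_simp
        have e1 : cM q j * |p i j / cM p j - q i j / cM q j|
            = |cM q j * (p i j / cM p j) - q i j| := by
          rw [show cM q j * (p i j / cM p j) - q i j
              = cM q j * (p i j / cM p j - q i j / cM q j) by rw [mul_sub, e2],
            abs_mul, abs_of_nonneg hcq0]
        have e3 : cM q j * (p i j / cM p j) - q i j
            = (p i j - q i j) + p i j * (cM q j - cM p j) / cM p j := by
          field_simp
          ring
        have e4 : |p i j * (cM q j - cM p j) / cM p j|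
            = (p i j / cM p j) * |cM p j - cM q j| := by
          rw [abs_div, abs_mul, abs_of_nonneg (hp i j), abs_of_pos hcp', abs_sub_comm]
          ring
        rw [e1, e3]
        refine (abs_add_le _ _).trans ?_
        rw [e4]
      calc ∑ i, cM q j * |p i j / cM p j - q i j / cM q j|
          ≤ ∑ i, (|p i j - q i j| + (p i j / cM p j) * |cM p j - cM q j|) :=
            Finset.sum_le_sum fun i _ => key i
        _ = (∑ i, |p i j - q i j|) + (∑ i, p i j / cM p j) * |cM p j - cM q j| := by
            rw [Finset.sum_add_distrib, Finset.sum_mul]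
        _ = (∑ i, |p i j - q i j|) + |cM p j - cM q j| := by
            rw [show (∑ i, p i j / cM p j) = 1 from sum_frac (fun i => p i j) hcp, one_mul]

lemma wphi (c t : ℝ) (hc0 : 0 ≤ c) : c * phi t = (c * t) * Real.log (c / (c * t)) := by
  by_cases hc : c = 0
  · simp [hc]
  · by_cases ht : t = 0
    · simp [ht, phi]
    · have h := mul_div_mul_left (1:ℝ) t hc
      rw [mul_one] at h
      rw [phi, ← h]
      ring

lemma main_bound {k l : ℕ} (hk : 2 ≤ k) (hl : 2 ≤ l) (p q : Fin k → Fin l → ℝ)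
    (hp : ∀ i j, 0 ≤ p i j) (hp1 : ∑ i, ∑ j, p i j = 1)
    (hq : ∀ i j, 0 ≤ q i j) (hq1 : ∑ i, ∑ j, q i j = 1)
    {δ : ℝ} (hδ0 : 0 < δ) (hδ4 : δ ≤ 1/4) (htv : tvDist p q ≤ δ) :
    |MI p - MI q| ≤ 12 * δ * Real.logb 2 ((k:ℝ) / δ) := by
  have hk1 : (1:ℕ) ≤ k := le_trans (by norm_num) hk
  have hkR : (2:ℝ) ≤ (k:ℝ) := by exact_mod_cast hk
  have hlog2pos : (0:ℝ) < Real.log 2 := Real.log_pos (by norm_num)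
  have habsdiff : ∑ i, ∑ j, |p i j - q i j| ≤ 2*δ := by
    rw [tvDist] at htv; linarith
  have hL2 : (2:ℝ) ≤ Real.log ((k:ℝ)/δ) := two_le_log hk hδ0 hδ4
  have hδk : δ ≤ (k:ℝ) := by linarith
  have hlogk0 : (0:ℝ) ≤ Real.log k := Real.log_nonneg (by linarith)
  have hlogkL : Real.log k ≤ Real.log ((k:ℝ)/δ) := by
    apply Real.log_le_log (by linarith)
    rw [le_div_iff₀ hδ0]
    nlinarith
  -- row marginal bounds
  have hrMp0 : ∀ i, 0 ≤ rM p i := fun i => Finset.sum_nonneg fun j _ => hp i j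
  have hrMq0 : ∀ i, 0 ≤ rM q i := fun i => Finset.sum_nonneg fun j _ => hq i j
  have hsum_rMp : ∑ i, rM p i = 1 := hp1
  have hsum_rMq : ∑ i, rM q i = 1 := hq1
  have hrMp1 : ∀ i, rM p i ≤ 1 := by
    intro i
    rw [← hsum_rMp]
    exact Finset.single_le_sum (fun i _ => hrMp0 i) (mem_univ i)
  have hrMq1 : ∀ i, rM q i ≤ 1 := by
    intro i
    rw [← hsum_rMq]
    exact Finset.single_le_sum (fun i _ => hrMq0 i) (mem_univ i)
  have hsum_e : ∑ i, |rM p i - rM q i| ≤ 2*δ := by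
    have h1 : ∀ i, |rM p i - rM q i| ≤ ∑ j, |p i j - q i j| := by
      intro i
      have : rM p i - rM q i = ∑ j, (p i j - q i j) := by
        rw [rM, rM, Finset.sum_sub_distrib]
      rw [this]
      exact Finset.abs_sum_le_sum_abs _ _
    calc ∑ i, |rM p i - rM q i| ≤ ∑ i, ∑ j, |p i j - q i j| :=
          Finset.sum_le_sum fun i _ => h1 i
      _ ≤ 2*δ := habsdiff
  -- E1 : row entropy difference
  have hE1 : |entR p - entR q| ≤ 2*δ*Real.log ((k:ℝ)/δ) + 3*δ := by
    have step : |entR p - entR q| ≤ ∑ i, (phi |rM p i - rM q i| + |rM p i - rM q i|) := by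
      rw [entR, entR, ← Finset.sum_sub_distrib]
      refine (Finset.abs_sum_le_sum_abs _ _).trans ?_
      exact Finset.sum_le_sum fun i _ => abs_phi_sub' (hrMp0 i) (hrMp1 i) (hrMq0 i) (hrMq1 i)
    have hphiE : ∑ i, phi |rM p i - rM q i| ≤ 2*δ*Real.log ((k:ℝ)/δ) + δ := by
      have hmb := masterBound (fun i => |rM p i - rM q i|) (fun _ => (1:ℝ))
        (fun i => abs_nonneg _) (fun i => zero_le_one) (fun i _ => one_ne_zero)
        (B := (k:ℝ)) (m := 2*δ) (δ := δ) (by simp) hsum_e hδ0 hδk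
      simpa [phi] using hmb
    rw [Finset.sum_add_distrib] at step
    linarith
  -- E2 : conditional entropy difference
  have hcolabs : ∑ j, |cM p j - cM q j| ≤ 2*δ := by
    have h1 : ∀ j, |cM p j - cM q j| ≤ ∑ i, |p i j - q i j| := by
      intro j
      have : cM p j - cM q j = ∑ i, (p i j - q i j) := by
        rw [cM, cM, Finset.sum_sub_distrib]
      rw [this]
      exact Finset.abs_sum_le_sum_abs _ _
    calc ∑ j, |cM p j - cM q j| ≤ ∑ j, ∑ i, |p i j - q i j| :=
          Finset.sum_le_sum fun j _ => h1 j
      _ = ∑ i, ∑ j, |p i j - q i j| := Finset.sum_comm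
      _ ≤ 2*δ := habsdiff
  have hcq0 : ∀ j, 0 ≤ cM q j := fun j => Finset.sum_nonneg fun i _ => hq i j
  have hcq1 : ∑ j, cM q j = 1 := by
    rw [show ∑ j, cM q j = ∑ j, ∑ i, q i j from rfl, Finset.sum_comm]
    exact hq1
  have hT : ∑ j, ∑ i, cM q j * |p i j / cM p j - q i j / cM q j| ≤ 4*δ := by
    calc ∑ j, ∑ i, cM q j * |p i j / cM p j - q i j / cM q j|
        ≤ ∑ j, ((∑ i, |p i j - q i j|) + |cM p j - cM q j|) :=
          Finset.sum_le_sum fun j _ => colT p q hp hq j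
      _ = (∑ j, ∑ i, |p i j - q i j|) + ∑ j, |cM p j - cM q j| := Finset.sum_add_distrib
      _ = (∑ i, ∑ j, |p i j - q i j|) + ∑ j, |cM p j - cM q j| := by rw [Finset.sum_comm]
      _ ≤ 2*δ + 2*δ := add_le_add habsdiff hcolabs
      _ = 4*δ := by ring
  have hP : ∑ j, ∑ i, cM q j * phi |p i j / cM p j - q i j / cM q j|
      ≤ 4*δ*Real.log ((k:ℝ)/δ) + δ := by
    have hBsum : ∑ z : Fin l × Fin k, cM q z.1 ≤ (k:ℝ) := by
      rw [Fintype.sum_prod_type]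
      have : ∀ j : Fin l, ∑ _i : Fin k, cM q j = (k:ℝ) * cM q j := by
        intro j; simp [Finset.sum_const, card_univ, mul_comm]
      rw [Finset.sum_congr rfl fun j _ => this j, ← Finset.mul_sum, hcq1, mul_one]
    have hmsum : ∑ z : Fin l × Fin k,
        cM q z.1 * |p z.2 z.1 / cM p z.1 - q z.2 z.1 / cM q z.1| ≤ 4*δ := by
      rw [Fintype.sum_prod_type]
      exact hT
    have hmb := masterBound
      (fun z : Fin l × Fin k => cM q z.1 * |p z.2 z.1 / cM p z.1 - q z.2 z.1 / cM q z.1|)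
      (fun z : Fin l × Fin k => cM q z.1)
      (fun z => mul_nonneg (hcq0 z.1) (abs_nonneg _))
      (fun z => hcq0 z.1)
      (fun z ha0 hb0 => ha0 (by
        have hz0 : cM q z.1 = 0 := hb0
        show cM q z.1 * _ = 0
        rw [hz0, zero_mul]))
      (B := (k:ℝ)) (m := 4*δ) (δ := δ) hBsum hmsum hδ0 hδk
    have hconv : ∑ j, ∑ i, cM q j * phi |p i j / cM p j - q i j / cM q j|
        = ∑ z : Fin l × Fin k,
            (cM q z.1 * |p z.2 z.1 / cM p z.1 - q z.2 z.1 / cM q z.1|)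
              * Real.log (cM q z.1 / (cM q z.1 * |p z.2 z.1 / cM p z.1 - q z.2 z.1 / cM q z.1|)) := by
      rw [Fintype.sum_prod_type]
      exact Finset.sum_congr rfl fun j _ => Finset.sum_congr rfl fun i _ =>
        wphi (cM q j) _ (hcq0 j)
    rw [hconv]
    exact hmb
  have hE2 : |condEnt p - condEnt q|
      ≤ 2*δ*Real.log ((k:ℝ)/δ) + (4*δ*Real.log ((k:ℝ)/δ) + δ) + 4*δ := by
    have step : |condEnt p - condEnt q|
        ≤ ∑ j, (|cM p j - cM q j| * Real.log k
            + ∑ i, (cM q j * phi |p i j / cM p j - q i j / cM q j|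
                + cM q j * |p i j / cM p j - q i j / cM q j|)) := by
      rw [condEnt, condEnt, ← Finset.sum_sub_distrib]
      refine (Finset.abs_sum_le_sum_abs _ _).trans ?_
      exact Finset.sum_le_sum fun j _ => col_bound hk1 p q hp hq j
    have expand : ∑ j, (|cM p j - cM q j| * Real.log k
            + ∑ i, (cM q j * phi |p i j / cM p j - q i j / cM q j|
                + cM q j * |p i j / cM p j - q i j / cM q j|))
        = (∑ j, |cM p j - cM q j|) * Real.log k
          + ((∑ j, ∑ i, cM q j * phi |p i j / cM p j - q i j / cM q j|)
            + ∑ j, ∑ i, cM q j * |p i j / cM p j - q i j / cM q j|) := by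
      rw [Finset.sum_add_distrib, ← Finset.sum_mul]
      congr 1
      rw [← Finset.sum_add_distrib]
      exact Finset.sum_congr rfl fun j _ => Finset.sum_add_distrib
    rw [expand] at step
    have hfirst : (∑ j, |cM p j - cM q j|) * Real.log k ≤ 2*δ*Real.log ((k:ℝ)/δ) :=
      mul_le_mul hcolabs hlogkL hlogk0 (by linarith)
    linarith
  have hMIp := MI_eq p hp
  have hMIq := MI_eq q hq
  have hnum : |MI p - MI q| * Real.log 2 ≤ 12 * δ * Real.log ((k:ℝ)/δ) := by
    have e1 : |MI p - MI q| * Real.log 2 = |(entR p - condEnt p) - (entR q - condEnt q)| := by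
      rw [← abs_of_pos hlog2pos, ← abs_mul, sub_mul, hMIp, hMIq]
    rw [e1]
    have e2 : |(entR p - condEnt p) - (entR q - condEnt q)|
        ≤ |entR p - entR q| + |condEnt p - condEnt q| := by
      have e3 : (entR p - condEnt p) - (entR q - condEnt q)
          = (entR p - entR q) - (condEnt p - condEnt q) := by ring
      rw [e3, sub_eq_add_neg]
      refine (abs_add_le _ _).trans ?_
      rw [abs_neg]
    have h8 : 8*δ ≤ 4*δ*Real.log ((k:ℝ)/δ) := by nlinarith
    linarith
  have hfin : |MI p - MI q| ≤ 12 * δ * (Real.log ((k:ℝ)/δ) / Real.log 2) := by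
    have e4 : 12*δ*(Real.log ((k:ℝ)/δ)/Real.log 2)
        = (12*δ*Real.log ((k:ℝ)/δ))/Real.log 2 := by ring
    rw [e4, le_div_iff₀ hlog2pos]
    exact hnum
  rw [← Real.log_div_log]
  exact hfin

lemma MI_swap {k l : ℕ} (p : Fin k → Fin l → ℝ) : MI (fun j i => p i j) = MI p := by
  rw [MI, MI, Finset.sum_comm]
  refine Finset.sum_congr rfl fun i _ => Finset.sum_congr rfl fun j _ => ?_
  show (if p i j = 0 then (0:ℝ) else p i j * Real.logb 2
      (p i j / ((∑ i' : Fin k, p i' j) * (∑ j' : Fin l, p i j')))) = _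
  by_cases h : p i j = 0
  · simp [h]
  · simp only [h, if_false]
    rw [mul_comm (∑ i' : Fin k, p i' j) (∑ j' : Fin l, p i j')]

lemma tv_swap {k l : ℕ} (p q : Fin k → Fin l → ℝ) :
    tvDist (fun j i => p i j) (fun j i => q i j) = tvDist p q := by
  rw [tvDist, tvDist, Finset.sum_comm]


end MIAux

theorem stmt8 :
    ∃ A > (0 : ℝ), ∀ (k l : ℕ), 2 ≤ k → 2 ≤ l →
      ∀ (p q : Fin k → Fin l → ℝ),
        (∀ i j, 0 ≤ p i j) → (∑ i, ∑ j, p i j) = 1 →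
        (∀ i j, 0 ≤ q i j) → (∑ i, ∑ j, q i j) = 1 →
        ∀ δ : ℝ, 0 < δ → δ ≤ 1 / 4 → tvDist p q ≤ δ →
          |MI p - MI q| ≤ A * δ * Real.logb 2 ((min k l : ℕ) / δ) := by
  refine ⟨12, by norm_num, ?_⟩
  intro k l hk hl p q hp hp1 hq hq1 δ hδ0 hδ4 htv
  rcases le_total k l with hkl | hlk
  · have hmin : min k l = k := min_eq_left hkl
    rw [hmin]
    exact MIAux.main_bound hk hl p q hp hp1 hq hq1 hδ0 hδ4 htv
  · have hmin : min k l = l := min_eq_right hlk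
    rw [hmin]
    have h := MIAux.main_bound hl hk (fun j i => p i j) (fun j i => q i j)
      (fun j i => hp i j) (by rw [Finset.sum_comm]; exact hp1)
      (fun j i => hq i j) (by rw [Finset.sum_comm]; exact hq1)
      hδ0 hδ4 (by rw [MIAux.tv_swap]; exact htv)
    rw [MIAux.MI_swap p, MIAux.MI_swap q] at h
    exact h


end
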